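/- For every ε > 0, the function f_G : ℝ → ℝ satisfies |f_G(x + y) − f_G(x) − f_G(y)| ≤ ε(|x| + |y|) for all x, y ∈ ℝ. -/

import Mathlib

/-- Gajda's function `ζ`. -/
noncomputable def zeta (ε : ℝ) (x : ℝ) : ℝ :=
  if 1 ≤ x then ε / 6 else if -1 < x then ε / 6 * x else -(ε / 6)

/-- Gajda's function `f_G x = ∑ₖ 2⁻ᵏ ζ(2ᵏ x)`. -/
noncomputable def fG (ε : ℝ) (x : ℝ) : ℝ := ∑' k : ℕ, zeta ε (2 ^ k * x) / 2 ^ k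

lemma zeta_abs_le {ε : ℝ} (hε : 0 ≤ ε) (t : ℝ) : |zeta ε t| ≤ ε / 6 := by
  unfold zeta
  split_ifs with h1 h2
  · rw [abs_of_nonneg (by linarith)]
  · rw [abs_mul]
    have ht : |t| ≤ 1 := by rw [abs_le]; constructor <;> linarith
    calc |ε/6| * |t| ≤ |ε/6| * 1 := by gcongr
      _ = ε/6 := by rw [mul_one, abs_of_nonneg (by linarith)]
  · rw [abs_neg, abs_of_nonneg (by linarith)]

lemma zeta_add {ε a b : ℝ} (ha : |a| < 1) (hb : |b| < 1) (hab : |a + b| < 1) :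
    zeta ε (a + b) = zeta ε a + zeta ε b := by
  rw [abs_lt] at ha hb hab
  unfold zeta
  rw [if_neg (by linarith), if_pos (by linarith), if_neg (by linarith),
    if_pos (by linarith), if_neg (by linarith), if_pos (by linarith)]
  ring

lemma summable_term {ε : ℝ} (hε : 0 ≤ ε) (t : ℝ) :
    Summable (fun k : ℕ => zeta ε (2 ^ k * t) / 2 ^ k) := by
  apply Summable.of_norm_bounded (g := fun k => (ε/6) * (1/2)^k)
    ((summable_geometric_of_lt_one (by norm_num) (by norm_num)).mul_left _)
  intro k
  rw [Real.norm_eq_abs, abs_div, abs_of_nonneg (by positivity : (0:ℝ) ≤ (2:ℝ)^k),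
    div_pow, one_pow, mul_one_div]
  gcongr
  exact zeta_abs_le hε _

set_option maxHeartbeats 1000000 in
theorem stmt1 (ε : ℝ) (hε : 0 < ε) (x y : ℝ) :
    |fG ε (x + y) - fG ε x - fG ε y| ≤ ε * (|x| + |y|) := by
  have hε' := hε.le
  set s := |x| + |y| with hs
  have hs0 : 0 ≤ s := by positivity
  rcases eq_or_lt_of_le hs0 with h0 | h0
  · have hx : x = 0 := abs_eq_zero.mp (by have := abs_nonneg x; have := abs_nonneg y; simp [hs] at h0; linarith)
    have hy : y = 0 := abs_eq_zero.mp (by have := abs_nonneg x; have := abs_nonneg y; simp [hs] at h0; linarith)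
    have hz : fG ε 0 = 0 := by
      unfold fG
      norm_num [zeta]
    simp [hx, hy, hz, ← h0]
  · -- main case
    have hex : ∃ n : ℕ, 1 ≤ 2 ^ n * s := by
      obtain ⟨n, hn⟩ := pow_unbounded_of_one_lt s⁻¹ (by norm_num : (1:ℝ) < 2)
      exact ⟨n, by rw [← inv_mul_cancel₀ h0.ne']; exact mul_le_mul_of_nonneg_right hn.le hs0⟩
    obtain ⟨N, hN, hklt⟩ : ∃ N : ℕ, 1 ≤ 2 ^ N * s ∧ ∀ k < N, 2 ^ k * s < 1 :=
      ⟨Nat.find hex, Nat.find_spec hex, fun k hk => lt_of_not_ge (Nat.find_min hex hk)⟩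
    set D : ℕ → ℝ := fun k =>
      zeta ε (2 ^ k * (x + y)) / 2 ^ k - zeta ε (2 ^ k * x) / 2 ^ k - zeta ε (2 ^ k * y) / 2 ^ k with hD
    have hsum : Summable D :=
      ((summable_term hε' (x+y)).sub (summable_term hε' x)).sub (summable_term hε' y)
    have heq : fG ε (x + y) - fG ε x - fG ε y = ∑' k, D k := by
      unfold fG
      rw [← Summable.tsum_sub (summable_term hε' (x+y)) (summable_term hε' x),
        ← Summable.tsum_sub ((summable_term hε' (x+y)).sub (summable_term hε' x)) (summable_term hε' y)]
    have hDzero : ∀ k < N, D k = 0 := by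
      intro k hk
      have hks := hklt k hk
      have h2k : (0:ℝ) < 2 ^ k := by positivity
      have hax : |2 ^ k * x| < 1 := by
        rw [abs_mul, abs_of_pos h2k]
        calc 2^k * |x| ≤ 2^k * s := by gcongr; simp [hs, abs_nonneg]
          _ < 1 := hks
      have hay : |2 ^ k * y| < 1 := by
        rw [abs_mul, abs_of_pos h2k]
        calc 2^k * |y| ≤ 2^k * s := by gcongr; simp [hs, abs_nonneg]
          _ < 1 := hks
      have haxy : |2 ^ k * x + 2 ^ k * y| < 1 := by
        calc |2 ^ k * x + 2 ^ k * y| ≤ |2^k*x| + |2^k*y| := abs_add_le _ _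
          _ = 2^k * s := by rw [abs_mul, abs_mul, abs_of_pos h2k, hs]; ring
          _ < 1 := hks
      have : zeta ε (2 ^ k * (x + y)) = zeta ε (2 ^ k * x) + zeta ε (2 ^ k * y) := by
        rw [mul_add]; exact zeta_add hax hay haxy
      simp [hD, this]; ring
    have hDabs : ∀ k, |D k| ≤ (ε/2) * (1/2)^k := by
      intro k
      have h2k : (0:ℝ) < 2 ^ k := by positivity
      have b1 := zeta_abs_le hε' (2 ^ k * (x+y))
      have b2 := zeta_abs_le hε' (2 ^ k * x)
      have b3 := zeta_abs_le hε' (2 ^ k * y)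
      have : |D k| ≤ (ε/6 + ε/6 + ε/6) / 2^k := by
        rw [hD]
        have h1 := abs_sub (zeta ε (2 ^ k * (x + y)) / 2 ^ k - zeta ε (2 ^ k * x) / 2 ^ k) (zeta ε (2 ^ k * y) / 2 ^ k)
        have h2 := abs_sub (zeta ε (2 ^ k * (x + y)) / 2 ^ k) (zeta ε (2 ^ k * x) / 2 ^ k)
        have e1 : |zeta ε (2 ^ k * (x+y)) / 2^k| ≤ (ε/6)/2^k := by
          rw [abs_div, abs_of_pos h2k]; gcongr
        have e2 : |zeta ε (2 ^ k * x) / 2^k| ≤ (ε/6)/2^k := by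
          rw [abs_div, abs_of_pos h2k]; gcongr
        have e3 : |zeta ε (2 ^ k * y) / 2^k| ≤ (ε/6)/2^k := by
          rw [abs_div, abs_of_pos h2k]; gcongr
        calc |_ - _ - _| ≤ _ := h1
          _ ≤ (ε/6)/2^k + (ε/6)/2^k + (ε/6)/2^k := by linarith
          _ = (ε/6 + ε/6 + ε/6)/2^k := by ring
      calc |D k| ≤ (ε/6 + ε/6 + ε/6) / 2^k := this
        _ = (ε/2) * (1/2)^k := by rw [div_pow, one_pow]; field_simp; ring
    rw [heq]
    have habs : Summable fun k => |D k| := hsum.abs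
    have key : ∑' k, |D k| ≤ ε * s := by
      rw [← Summable.sum_add_tsum_nat_add N habs]
      have hz : ∑ k ∈ Finset.range N, |D k| = 0 := by
        apply Finset.sum_eq_zero
        intro k hk
        rw [hDzero k (Finset.mem_range.mp hk), abs_zero]
      rw [hz, zero_add]
      have hgeo : Summable (fun k : ℕ => (ε/2) * ((1/2:ℝ)^k * (1/2:ℝ)^N)) := by
        apply Summable.mul_left
        exact (summable_geometric_of_lt_one (by norm_num) (by norm_num)).mul_right _
      calc ∑' k, |D (k + N)| ≤ ∑' k : ℕ, (ε/2) * ((1/2:ℝ)^k * (1/2:ℝ)^N) := by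
            refine Summable.tsum_le_tsum (fun k => ?_) ((summable_nat_add_iff N).mpr habs) hgeo
            calc |D (k + N)| ≤ (ε/2) * (1/2)^(k+N) := hDabs (k+N)
              _ = (ε/2) * ((1/2:ℝ)^k * (1/2:ℝ)^N) := by rw [pow_add]
        _ = (ε/2) * (1/2)^N * (2:ℝ) := by
            rw [tsum_mul_left, tsum_mul_right,
              tsum_geometric_of_lt_one (by norm_num) (by norm_num)]
            norm_num
            ring
        _ = ε * (1/2)^N := by ring
        _ ≤ ε * s := by
            gcongr
            rw [div_pow, one_pow, div_le_iff₀ (by positivity)]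
            linarith [hN]
    calc |∑' k, D k| ≤ ∑' k, |D k| := by
          have := norm_tsum_le_tsum_norm (f := D) (by simpa [Real.norm_eq_abs] using habs)
          simpa [Real.norm_eq_abs] using this
      _ ≤ ε * s := key
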